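/- The monomials d^s · l(n₁,x₁)⋯l(n_k,x_k) · r(m₁,z₁)⋯r(m_p,z_p), where s, k, p range over ℕ (empty products allowed), n_i, m_j ∈ ℕ and x_i, z_j ∈ X, form a k-basis of the algebra A(X). (Equivalently, the defining relations of A(X) form a Gröbner–Shirshov basis.) -/

import Mathlib

/-- Generators of the algebra `A(X)`: `d`, and `l(n,a)`, `r(n,a)` for `n ∈ ℕ`, `a ∈ X`. -/
inductive AGen (X : Type*) where
  | d : AGen X
  | l (n : ℕ) (a : X) : AGen X
  | r (n : ℕ) (a : X) : AGen X

/-- Defining relations of `A(X)`: `l(n,a)·d = d·l(n,a) + n·l(n−1,a)`,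
`r(n,a)·d = d·r(n,a) + n·r(n−1,a)` (with `l(−1,a) = r(−1,a) = 0`, which is automatic here
since the coefficient `n` vanishes when `n = 0`), and `r(n,a)·l(m,b) = l(m,b)·r(n,a)`. -/
inductive ARel (k : Type*) [CommRing k] (X : Type*) :
    FreeAlgebra k (AGen X) → FreeAlgebra k (AGen X) → Prop
  | ld (n : ℕ) (a : X) :
      ARel k X (FreeAlgebra.ι k (AGen.l n a) * FreeAlgebra.ι k AGen.d)
        (FreeAlgebra.ι k AGen.d * FreeAlgebra.ι k (AGen.l n a) +
          n • FreeAlgebra.ι k (AGen.l (n - 1) a))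
  | rd (n : ℕ) (a : X) :
      ARel k X (FreeAlgebra.ι k (AGen.r n a) * FreeAlgebra.ι k AGen.d)
        (FreeAlgebra.ι k AGen.d * FreeAlgebra.ι k (AGen.r n a) +
          n • FreeAlgebra.ι k (AGen.r (n - 1) a))
  | rl (n m : ℕ) (a b : X) :
      ARel k X (FreeAlgebra.ι k (AGen.r n a) * FreeAlgebra.ι k (AGen.l m b))
        (FreeAlgebra.ι k (AGen.l m b) * FreeAlgebra.ι k (AGen.r n a))

/-- The algebra `A(X)` presented by the generators `AGen X` and relations `ARel k X`. -/
abbrev AAlg (k : Type*) [CommRing k] (X : Type*) := RingQuot (ARel k X)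


open Finset

namespace AAlgBasisProof

lemma descFactorial_succ' (n j : ℕ) :
    n.descFactorial (j+1) = n * (n-1).descFactorial j := by
  cases n with
  | zero => simp
  | succ m => simpa using Nat.succ_descFactorial_succ m j

variable (k : Type*) [CommRing k] (X : Type*)

abbrev W (X : Type*) := ℕ × List (ℕ × X) × List (ℕ × X)

noncomputable def Dop : (W X →₀ k) →ₗ[k] (W X →₀ k) :=
  Finsupp.lmapDomain k k (fun w => (w.1 + 1, w.2))

noncomputable def Lop (n : ℕ) (a : X) : (W X →₀ k) →ₗ[k] (W X →₀ k) :=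
  Finsupp.lift _ k _ fun w => ∑ j ∈ range (w.1 + 1),
    ((w.1.choose j * n.descFactorial j : ℕ) : k) •
      Finsupp.single (w.1 - j, (n - j, a) :: w.2.1, w.2.2) 1

noncomputable def Rop (n : ℕ) (a : X) : (W X →₀ k) →ₗ[k] (W X →₀ k) :=
  Finsupp.lift _ k _ fun w => ∑ j ∈ range (w.1 + 1),
    ((w.1.choose j * n.descFactorial j : ℕ) : k) •
      Finsupp.single (w.1 - j, w.2.1, (n - j, a) :: w.2.2) 1

@[simp] lemma Dop_single (w : W X) (c : k) :
    Dop k X (Finsupp.single w c) = Finsupp.single (w.1 + 1, w.2) c := by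
  simp [Dop]

lemma Lop_single (n : ℕ) (a : X) (s : ℕ) (L R : List (ℕ × X)) :
    Lop k X n a (Finsupp.single (s, L, R) 1) = ∑ j ∈ range (s + 1),
      ((s.choose j * n.descFactorial j : ℕ) : k) •
        Finsupp.single (s - j, (n - j, a) :: L, R) 1 := by
  simp [Lop, Finsupp.lift_apply, Finsupp.sum_single_index]

lemma Rop_single (n : ℕ) (a : X) (s : ℕ) (L R : List (ℕ × X)) :
    Rop k X n a (Finsupp.single (s, L, R) 1) = ∑ j ∈ range (s + 1),
      ((s.choose j * n.descFactorial j : ℕ) : k) •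
        Finsupp.single (s - j, L, (n - j, a) :: R) 1 := by
  simp [Rop, Finsupp.lift_apply, Finsupp.sum_single_index]

variable {M : Type*} [AddCommGroup M] [Module k M]

lemma End_ext {f g : (W X →₀ k) →ₗ[k] M}
    (h : ∀ w, f (Finsupp.single w 1) = g (Finsupp.single w 1)) : f = g := by
  apply Finsupp.lhom_ext; intro w b
  have e : (Finsupp.single w b) = b • Finsupp.single w (1:k) := by
    rw [Finsupp.smul_single, smul_eq_mul, mul_one]
  rw [e, map_smul, map_smul, h]

end AAlgBasisProof

namespace AAlgBasisProof
open Finset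
variable {k₀ : Type*}

lemma trinom {s i j : ℕ} (h : j + i ≤ s) :
    s.choose j * (s-j).choose i = s.choose i * (s-i).choose j := by
  have h1 := Nat.choose_mul (n := s) (k := j+i) (s := j) (Nat.le_add_right _ _)
  have h2 := Nat.choose_mul (n := s) (k := j+i) (s := i) (Nat.le_add_left _ _)
  simp only [Nat.add_sub_cancel_left, Nat.add_sub_cancel] at h1 h2
  rw [← h1, ← h2, Nat.choose_symm_add]

section
variable {k : Type*} [CommRing k] {M : Type*} [AddCommGroup M] [Module k M]

lemma sum_pascal (s n : ℕ) (G : ℕ → M) :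
    ∑ j ∈ range (s+2), (((s+1).choose j * n.descFactorial j : ℕ) : k) • G j
    = ∑ j ∈ range (s+1), ((s.choose j * n.descFactorial j : ℕ) : k) • G j
      + ∑ j ∈ range (s+1), ((s.choose j * n.descFactorial (j+1) : ℕ) : k) • G (j+1) := by
  rw [Finset.sum_range_succ' _ (s+1)]
  have key : ∀ i, (((s+1).choose (i+1) * n.descFactorial (i+1) : ℕ) : k) • G (i+1)
      = ((s.choose (i+1) * n.descFactorial (i+1) : ℕ) : k) • G (i+1)
        + ((s.choose i * n.descFactorial (i+1) : ℕ) : k) • G (i+1) := by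
    intro i
    rw [Nat.choose_succ_succ' s i, Nat.add_mul, Nat.cast_add, add_smul, add_comm]
  rw [Finset.sum_congr rfl (fun i _ => key i), Finset.sum_add_distrib]
  have h1 : ∑ j ∈ range (s+1), ((s.choose j * n.descFactorial j : ℕ) : k) • G j
      = ∑ i ∈ range s, ((s.choose (i+1) * n.descFactorial (i+1) : ℕ) : k) • G (i+1)
        + ((s.choose 0 * n.descFactorial 0 : ℕ) : k) • G 0 := Finset.sum_range_succ' _ s
  have h2 : ∑ i ∈ range (s+1), ((s.choose (i+1) * n.descFactorial (i+1) : ℕ) : k) • G (i+1)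
      = ∑ i ∈ range s, ((s.choose (i+1) * n.descFactorial (i+1) : ℕ) : k) • G (i+1) := by
    rw [Finset.sum_range_succ]; simp
  rw [h1, h2]
  simp only [Nat.choose_zero_right, Nat.descFactorial_zero, mul_one, Nat.cast_one]
  abel
end

variable (k : Type*) [CommRing k] (X : Type*)

lemma rel_ld (n : ℕ) (a : X) :
    (Lop k X n a) * (Dop k X)
      = (Dop k X) * (Lop k X n a) + n • Lop k X (n-1) a := by
  rw [← Nat.cast_smul_eq_nsmul k]
  apply End_ext
  rintro ⟨s, L, R⟩
  rw [Module.End.mul_apply, LinearMap.add_apply, Module.End.mul_apply, LinearMap.smul_apply,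
    Dop_single]
  simp only [Lop_single, map_sum, map_smul, Dop_single, Finset.smul_sum, smul_smul]
  have e1 : ∀ j ∈ range (s+1),
      ((s.choose j * n.descFactorial j : ℕ) : k) •
        Finsupp.single (((s - j : ℕ), ((n - j, a) :: L, R)).1 + 1,
          ((s - j : ℕ), ((n - j, a) :: L, R)).2) (1:k)
      = ((s.choose j * n.descFactorial j : ℕ) : k) •
        Finsupp.single (s + 1 - j, (n - j, a) :: L, R) (1:k) := by
    intro j hj
    have : s - j + 1 = s + 1 - j := by
      rw [Finset.mem_range] at hj; omega
    simp [this]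
  have e2 : ∀ j ∈ range (s+1),
      ((n : k) * ((s.choose j * (n-1).descFactorial j : ℕ) : k)) •
        Finsupp.single (s - j, ((n - 1 - j, a) :: L, R)) (1:k)
      = ((s.choose j * n.descFactorial (j+1) : ℕ) : k) •
        Finsupp.single (s + 1 - (j+1), ((n - (j+1), a) :: L, R)) (1:k) := by
    intro j hj
    have h1 : s - j = s + 1 - (j+1) := by omega
    have h2 : n - 1 - j = n - (j+1) := by omega
    have h3 : (n : k) * ((s.choose j * (n-1).descFactorial j : ℕ) : k)
        = ((s.choose j * n.descFactorial (j+1) : ℕ) : k) := by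
      rw [descFactorial_succ']; push_cast; ring
    rw [h1, h2, h3]
  rw [Finset.sum_congr rfl e1, Finset.sum_congr rfl e2]
  exact sum_pascal s n _

end AAlgBasisProof

namespace AAlgBasisProof
open Finset
variable (k : Type*) [CommRing k] (X : Type*)

lemma rel_rd (n : ℕ) (a : X) :
    (Rop k X n a) * (Dop k X)
      = (Dop k X) * (Rop k X n a) + n • Rop k X (n-1) a := by
  rw [← Nat.cast_smul_eq_nsmul k]
  apply End_ext
  rintro ⟨s, L, R⟩
  rw [Module.End.mul_apply, LinearMap.add_apply, Module.End.mul_apply, LinearMap.smul_apply,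
    Dop_single]
  simp only [Rop_single, map_sum, map_smul, Dop_single, Finset.smul_sum, smul_smul]
  have e1 : ∀ j ∈ range (s+1),
      ((s.choose j * n.descFactorial j : ℕ) : k) •
        Finsupp.single (((s - j : ℕ), (L, (n - j, a) :: R)).1 + 1,
          ((s - j : ℕ), (L, (n - j, a) :: R)).2) (1:k)
      = ((s.choose j * n.descFactorial j : ℕ) : k) •
        Finsupp.single (s + 1 - j, L, (n - j, a) :: R) (1:k) := by
    intro j hj
    have : s - j + 1 = s + 1 - j := by
      rw [Finset.mem_range] at hj; omega
    simp [this]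
  have e2 : ∀ j ∈ range (s+1),
      ((n : k) * ((s.choose j * (n-1).descFactorial j : ℕ) : k)) •
        Finsupp.single (s - j, (L, (n - 1 - j, a) :: R)) (1:k)
      = ((s.choose j * n.descFactorial (j+1) : ℕ) : k) •
        Finsupp.single (s + 1 - (j+1), (L, (n - (j+1), a) :: R)) (1:k) := by
    intro j hj
    have h1 : s - j = s + 1 - (j+1) := by omega
    have h2 : n - 1 - j = n - (j+1) := by omega
    have h3 : (n : k) * ((s.choose j * (n-1).descFactorial j : ℕ) : k)
        = ((s.choose j * n.descFactorial (j+1) : ℕ) : k) := by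
      rw [descFactorial_succ']; push_cast; ring
    rw [h1, h2, h3]
  rw [Finset.sum_congr rfl e1, Finset.sum_congr rfl e2]
  exact sum_pascal s n _

lemma rel_rl (n m : ℕ) (a b : X) :
    (Rop k X n a) * (Lop k X m b) = (Lop k X m b) * (Rop k X n a) := by
  apply End_ext
  rintro ⟨s, L, R⟩
  rw [Module.End.mul_apply, Module.End.mul_apply, Lop_single, Rop_single, map_sum, map_sum]
  simp only [map_smul, Lop_single, Rop_single, Finset.smul_sum, smul_smul]
  rw [Finset.sum_comm' (t' := range (s+1)) (s' := fun i => range (s - i + 1))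
    (by intro x y; simp only [Finset.mem_range]; omega)]
  refine Finset.sum_congr rfl fun i hi => Finset.sum_congr rfl fun j hj => ?_
  rw [Finset.mem_range] at hi hj
  have hji : j + i ≤ s := by omega
  have h1 : s - j - i = s - i - j := by omega
  have h2 : ((s.choose j * m.descFactorial j : ℕ) : k) * ((s - j).choose i * n.descFactorial i : ℕ)
      = ((s.choose i * n.descFactorial i : ℕ) : k) * ((s - i).choose j * m.descFactorial j : ℕ) := by
    rw [← Nat.cast_mul, ← Nat.cast_mul]
    congr 1
    calc s.choose j * m.descFactorial j * ((s - j).choose i * n.descFactorial i)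
        = s.choose j * (s - j).choose i * (m.descFactorial j * n.descFactorial i) := by ring
      _ = s.choose i * (s - i).choose j * (m.descFactorial j * n.descFactorial i) := by
          rw [trinom hji]
      _ = s.choose i * n.descFactorial i * ((s - i).choose j * m.descFactorial j) := by ring
  rw [h1, h2]

end AAlgBasisProof



namespace AAlgBasisProof
open Finset
variable (k : Type*) [CommRing k] (X : Type*)

noncomputable def genAct : AGen X → Module.End k (W X →₀ k)
  | .d => Dop k X
  | .l n a => Lop k X n a
  | .r n a => Rop k X n a

noncomputable def Phi0 : FreeAlgebra k (AGen X) →ₐ[k] Module.End k (W X →₀ k) :=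
  FreeAlgebra.lift k (genAct k X)

@[simp] lemma Phi0_d : Phi0 k X (FreeAlgebra.ι k AGen.d) = Dop k X := by
  simp [Phi0, genAct]

@[simp] lemma Phi0_l (n : ℕ) (a : X) :
    Phi0 k X (FreeAlgebra.ι k (AGen.l n a)) = Lop k X n a := by
  simp [Phi0, genAct]

@[simp] lemma Phi0_r (n : ℕ) (a : X) :
    Phi0 k X (FreeAlgebra.ι k (AGen.r n a)) = Rop k X n a := by
  simp [Phi0, genAct]

lemma Phi0_rel : ∀ ⦃x y⦄, ARel k X x y → Phi0 k X x = Phi0 k X y := by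
  intro x y h
  cases h with
  | ld n a => simpa using rel_ld k X n a
  | rd n a => simpa using rel_rd k X n a
  | rl n m a b => simpa using rel_rl k X n m a b

noncomputable def Phi : AAlg k X →ₐ[k] Module.End k (W X →₀ k) :=
  RingQuot.liftAlgHom k ⟨Phi0 k X, Phi0_rel k X⟩

@[simp] lemma Phi_mk (x : FreeAlgebra k (AGen X)) :
    Phi k X (RingQuot.mkAlgHom k (ARel k X) x) = Phi0 k X x :=
  RingQuot.liftAlgHom_mkAlgHom_apply _ _ _ _

end AAlgBasisProof

namespace AAlgBasisProof
open Finset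
variable (k : Type*) [CommRing k] (X : Type*)

noncomputable def Dq : AAlg k X := RingQuot.mkAlgHom k (ARel k X) (FreeAlgebra.ι k AGen.d)
noncomputable def Lq (n : ℕ) (a : X) : AAlg k X :=
  RingQuot.mkAlgHom k (ARel k X) (FreeAlgebra.ι k (AGen.l n a))
noncomputable def Rq (n : ℕ) (a : X) : AAlg k X :=
  RingQuot.mkAlgHom k (ARel k X) (FreeAlgebra.ι k (AGen.r n a))

noncomputable def mono (w : W X) : AAlg k X :=
  (Dq k X) ^ w.1 * (w.2.1.map fun p => Lq k X p.1 p.2).prod *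
    (w.2.2.map fun p => Rq k X p.1 p.2).prod

-- vacuum computations
lemma Lop_vac (n : ℕ) (a : X) (L R : List (ℕ × X)) :
    Lop k X n a (Finsupp.single (0, L, R) 1) = Finsupp.single (0, (n, a) :: L, R) 1 := by
  rw [Lop_single, Finset.sum_range_one]
  norm_num

lemma Rop_vac (n : ℕ) (a : X) (L R : List (ℕ × X)) :
    Rop k X n a (Finsupp.single (0, L, R) 1) = Finsupp.single (0, L, (n, a) :: R) 1 := by
  rw [Rop_single, Finset.sum_range_one]
  norm_num

lemma prodR_vac (R' : List (ℕ × X)) (L R : List (ℕ × X)) :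
    ((R'.map fun p => Rop k X p.1 p.2).prod) (Finsupp.single (0, L, R) 1)
      = Finsupp.single (0, L, R' ++ R) 1 := by
  induction R' with
  | nil => simp
  | cons p R' ih =>
    rw [List.map_cons, List.prod_cons, Module.End.mul_apply, ih, Rop_vac]
    simp

lemma prodL_vac (L' : List (ℕ × X)) (L R : List (ℕ × X)) :
    ((L'.map fun p => Lop k X p.1 p.2).prod) (Finsupp.single (0, L, R) 1)
      = Finsupp.single (0, L' ++ L, R) 1 := by
  induction L' with
  | nil => simp
  | cons p L' ih =>
    rw [List.map_cons, List.prod_cons, Module.End.mul_apply, ih, Lop_vac]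
    simp

lemma Dpow_vac (s t : ℕ) (L R : List (ℕ × X)) :
    ((Dop k X) ^ s) (Finsupp.single (t, L, R) 1) = Finsupp.single (t + s, L, R) 1 := by
  induction s with
  | zero => simp
  | succ s ih =>
    rw [pow_succ', Module.End.mul_apply, ih]
    have : Dop k X (Finsupp.single (t + s, L, R) (1:k))
        = Finsupp.single (t + s + 1, L, R) 1 := by simp
    rw [this, Nat.add_assoc]

lemma Phi_mono_vac (w : W X) :
    Phi k X (mono k X w) (Finsupp.single ((0, [], []) : W X) 1) = Finsupp.single w 1 := by
  obtain ⟨s, L, R⟩ := w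
  rw [mono, map_mul, map_mul, map_pow]
  have hD : Phi k X (Dq k X) = Dop k X := by rw [Dq, Phi_mk, Phi0_d]
  have hL : (Phi k X) ((L.map fun p => Lq k X p.1 p.2).prod)
      = ((L.map fun p => Lop k X p.1 p.2).prod) := by
    rw [map_list_prod, List.map_map]
    congr 1
    apply List.map_congr_left
    intro p _
    simp [Function.comp, Lq]
  have hR : (Phi k X) ((R.map fun p => Rq k X p.1 p.2).prod)
      = ((R.map fun p => Rop k X p.1 p.2).prod) := by
    rw [map_list_prod, List.map_map]
    congr 1
    apply List.map_congr_left
    intro p _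
    simp [Function.comp, Rq]
  rw [hD, hL, hR, Module.End.mul_apply, Module.End.mul_apply, prodR_vac, prodL_vac, Dpow_vac]
  simp

end AAlgBasisProof

namespace AAlgBasisProof
open Finset
variable (k : Type*) [CommRing k] (X : Type*)

noncomputable def T : AAlg k X →ₗ[k] (W X →₀ k) where
  toFun x := Phi k X x (Finsupp.single ((0, [], []) : W X) 1)
  map_add' x y := by simp [map_add]
  map_smul' c x := by simp [map_smul]

lemma T_mono (w : W X) : T k X (mono k X w) = Finsupp.single w 1 := Phi_mono_vac k X w

-- relations in AAlg
lemma relq_ld (n : ℕ) (a : X) :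
    Lq k X n a * Dq k X = Dq k X * Lq k X n a + (n : k) • Lq k X (n-1) a := by
  have h := RingQuot.mkAlgHom_rel k (ARel.ld (k := k) (X := X) n a)
  rw [map_mul, map_add, map_nsmul, map_mul] at h
  rw [Lq, Dq, h, Nat.cast_smul_eq_nsmul]
  rfl

lemma relq_rd (n : ℕ) (a : X) :
    Rq k X n a * Dq k X = Dq k X * Rq k X n a + (n : k) • Rq k X (n-1) a := by
  have h := RingQuot.mkAlgHom_rel k (ARel.rd (k := k) (X := X) n a)
  rw [map_mul, map_add, map_nsmul, map_mul] at h
  rw [Rq, Dq, h, Nat.cast_smul_eq_nsmul]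
  rfl

lemma relq_rl (n m : ℕ) (a b : X) :
    Rq k X n a * Lq k X m b = Lq k X m b * Rq k X n a := by
  have h := RingQuot.mkAlgHom_rel k (ARel.rl (k := k) (X := X) n m a b)
  rw [map_mul, map_mul] at h
  exact h

-- generic expansion lemma
lemma expand {A : Type*} [Ring A] [Algebra k A] (d : A) (f : ℕ → A)
    (hf : ∀ n, f n * d = d * f n + (n : k) • f (n-1)) (s n : ℕ) :
    f n * d ^ s = ∑ j ∈ range (s+1),
      ((s.choose j * n.descFactorial j : ℕ) : k) • (d ^ (s-j) * f (n-j)) := by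
  induction s with
  | zero => simp
  | succ s ih =>
    rw [pow_succ, ← mul_assoc, ih, Finset.sum_mul]
    have e : ∀ j ∈ range (s+1),
        (((s.choose j * n.descFactorial j : ℕ) : k) • (d ^ (s-j) * f (n-j))) * d
        = ((s.choose j * n.descFactorial j : ℕ) : k) • (d ^ (s+1-j) * f (n-j))
          + ((s.choose j * n.descFactorial (j+1) : ℕ) : k) • (d ^ (s+1-(j+1)) * f (n-(j+1))) := by
      intro j hj
      rw [Finset.mem_range] at hj
      rw [smul_mul_assoc, mul_assoc, hf (n-j), mul_add, smul_add, ← mul_assoc, ← pow_succ,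
        mul_smul_comm, smul_smul]
      have h1 : s - j + 1 = s + 1 - j := by omega
      have h2 : ((s.choose j * n.descFactorial j : ℕ) : k) * ((n - j : ℕ) : k)
          = ((s.choose j * n.descFactorial (j+1) : ℕ) : k) := by
        rw [Nat.descFactorial_succ]; push_cast; ring
      have h3 : s + 1 - (j + 1) = s - j := by omega
      have h4 : n - (j + 1) = n - j - 1 := by omega
      rw [h1, h2, h3, h4]
    rw [Finset.sum_congr rfl e, Finset.sum_add_distrib]
    exact (sum_pascal s n fun j => d ^ (s+1-j) * f (n-j)).symm

lemma Lq_mul_mono (n : ℕ) (a : X) (s : ℕ) (L R : List (ℕ × X)) :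
    Lq k X n a * mono k X (s, L, R)
      = ∑ j ∈ range (s+1), ((s.choose j * n.descFactorial j : ℕ) : k) •
          mono k X (s-j, (n-j, a) :: L, R) := by
  have hexp := expand k (Dq k X) (fun n => Lq k X n a) (fun n => relq_ld k X n a) s n
  rw [mono, ← mul_assoc, ← mul_assoc, hexp, Finset.sum_mul, Finset.sum_mul]
  refine Finset.sum_congr rfl fun j hj => ?_
  rw [smul_mul_assoc, smul_mul_assoc, mono]
  simp only [List.map_cons, List.prod_cons]
  rw [mul_assoc (Dq k X ^ (s-j))]

lemma Rq_comm_prodL (n : ℕ) (a : X) (L : List (ℕ × X)) :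
    Rq k X n a * (L.map fun p => Lq k X p.1 p.2).prod
      = (L.map fun p => Lq k X p.1 p.2).prod * Rq k X n a := by
  induction L with
  | nil => simp
  | cons p L ih =>
    simp only [List.map_cons, List.prod_cons]
    rw [← mul_assoc, relq_rl, mul_assoc, ih, ← mul_assoc]

lemma Rq_mul_mono (n : ℕ) (a : X) (s : ℕ) (L R : List (ℕ × X)) :
    Rq k X n a * mono k X (s, L, R)
      = ∑ j ∈ range (s+1), ((s.choose j * n.descFactorial j : ℕ) : k) •
          mono k X (s-j, L, (n-j, a) :: R) := by
  have hexp := expand k (Dq k X) (fun n => Rq k X n a) (fun n => relq_rd k X n a) s n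
  rw [mono, ← mul_assoc, ← mul_assoc, hexp, Finset.sum_mul, Finset.sum_mul]
  refine Finset.sum_congr rfl fun j hj => ?_
  rw [smul_mul_assoc, smul_mul_assoc, mono]
  simp only [List.map_cons, List.prod_cons]
  rw [mul_assoc (Dq k X ^ (s-j)), Rq_comm_prodL, ← mul_assoc (Dq k X ^ (s-j)), mul_assoc]

lemma Dq_mul_mono (s : ℕ) (L R : List (ℕ × X)) :
    Dq k X * mono k X (s, L, R) = mono k X (s+1, L, R) := by
  rw [mono, mono, ← mul_assoc, ← mul_assoc, ← pow_succ']

lemma mono_zero : mono k X (0, [], []) = 1 := by simp [mono]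

end AAlgBasisProof


open AAlgBasisProof in
/-- The monomials `d^s · l(n₁,x₁)⋯l(n_k,x_k) · r(m₁,z₁)⋯r(m_p,z_p)`
(`s, k, p ∈ ℕ`, empty products allowed, `nᵢ, mⱼ ∈ ℕ`, `xᵢ, zⱼ ∈ X`) form a `k`-basis of
`A(X)`; equivalently, the defining relations of `A(X)` form a Gröbner–Shirshov basis. -/
theorem AAlg_basis (k : Type*) [Field k] (X : Type*) :
    LinearIndependent k
      (fun w : ℕ × List (ℕ × X) × List (ℕ × X) =>
        (RingQuot.mkAlgHom k (ARel k X) (FreeAlgebra.ι k AGen.d)) ^ w.1 *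
          (w.2.1.map fun p =>
            RingQuot.mkAlgHom k (ARel k X) (FreeAlgebra.ι k (AGen.l p.1 p.2))).prod *
          (w.2.2.map fun p =>
            RingQuot.mkAlgHom k (ARel k X) (FreeAlgebra.ι k (AGen.r p.1 p.2))).prod) ∧
    Submodule.span k
      (Set.range
        (fun w : ℕ × List (ℕ × X) × List (ℕ × X) =>
          (RingQuot.mkAlgHom k (ARel k X) (FreeAlgebra.ι k AGen.d)) ^ w.1 *
            (w.2.1.map fun p =>
              RingQuot.mkAlgHom k (ARel k X) (FreeAlgebra.ι k (AGen.l p.1 p.2))).prod *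
            (w.2.2.map fun p =>
              RingQuot.mkAlgHom k (ARel k X) (FreeAlgebra.ι k (AGen.r p.1 p.2))).prod))
      = (⊤ : Submodule k (AAlg k X)) := by
  constructor
  · show LinearIndependent k (fun w : W X => mono k X w)
    apply LinearIndependent.of_comp (T k X)
    have h1 : (⇑(T k X)) ∘ (fun w : W X => mono k X w)
        = fun w : W X => Finsupp.single w (1:k) := by
      funext w; exact T_mono k X w
    rw [h1]
    have h2 := (Finsupp.basisSingleOne (ι := W X) (R := k)).linearIndependent
    rwa [Finsupp.coe_basisSingleOne] at h2
  · show Submodule.span k (Set.range fun w : W X => mono k X w) = ⊤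
    have key : ∀ x : FreeAlgebra k (AGen X),
        ∀ v ∈ Submodule.span k (Set.range fun w : W X => mono k X w),
        RingQuot.mkAlgHom k (ARel k X) x * v
          ∈ Submodule.span k (Set.range fun w : W X => mono k X w) := by
      intro x
      induction x using FreeAlgebra.induction with
      | grade0 r =>
        intro v hv
        rw [AlgHom.commutes, ← Algebra.smul_def]
        exact Submodule.smul_mem _ _ hv
      | mul a b ha hb =>
        intro v hv
        rw [map_mul, mul_assoc]
        exact ha _ (hb _ hv)
      | add a b ha hb =>
        intro v hv
        rw [map_add, add_mul]
        exact add_mem (ha _ hv) (hb _ hv)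
      | grade1 g =>
        intro v hv
        induction hv using Submodule.span_induction with
        | mem u hu =>
          obtain ⟨w, rfl⟩ := hu
          obtain ⟨s, L, R⟩ := w
          cases g with
          | d =>
            rw [show RingQuot.mkAlgHom k (ARel k X) (FreeAlgebra.ι k AGen.d) = Dq k X
              from rfl, Dq_mul_mono]
            exact Submodule.subset_span ⟨_, rfl⟩
          | l n a =>
            rw [show RingQuot.mkAlgHom k (ARel k X) (FreeAlgebra.ι k (AGen.l n a)) = Lq k X n a
              from rfl, Lq_mul_mono]
            exact Submodule.sum_mem _ fun j hj =>
              Submodule.smul_mem _ _ (Submodule.subset_span ⟨_, rfl⟩)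
          | r n a =>
            rw [show RingQuot.mkAlgHom k (ARel k X) (FreeAlgebra.ι k (AGen.r n a)) = Rq k X n a
              from rfl, Rq_mul_mono]
            exact Submodule.sum_mem _ fun j hj =>
              Submodule.smul_mem _ _ (Submodule.subset_span ⟨_, rfl⟩)
        | zero => simp
        | add x y hx hy hxm hym =>
          rw [mul_add]; exact add_mem hxm hym
        | smul c x hx hxm =>
          rw [mul_smul_comm]; exact Submodule.smul_mem _ _ hxm
    apply top_unique
    intro v _
    obtain ⟨x, rfl⟩ := RingQuot.mkAlgHom_surjective k (ARel k X) v
    have h1 : (1 : AAlg k X) ∈ Submodule.span k (Set.range fun w : W X => mono k X w) :=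
      mono_zero k X ▸ Submodule.subset_span ⟨(0, [], []), rfl⟩
    simpa using key x 1 h1
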